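/- The graph parameters γ_1 and γ_2 are monotone under induced subgraphs: if H is an induced subgraph of G, then γ_r(H) ≤ γ_r(G) for r ∈ {1, 2}. -/

import Mathlib

open scoped Classical

namespace StmtDefs

/-- omega(v): the size of a largest clique containing v. -/
noncomputable def cliqueAt {V : Type*} (Q : SimpleGraph V) (v : V) : ℕ :=
  sSup {n | ∃ s : Finset V, Q.IsNClique n s ∧ v ∈ s}

/-- The degree of a vertex of a simple graph. -/
noncomputable def ndeg {V : Type*} (Q : SimpleGraph V) (v : V) : ℕ :=
  Nat.card {w | Q.Adj v w}

/-- The average of (d(v) + omega(v) + 1)/2 over a set X of vertices. -/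
noncomputable def gammaVal {V : Type*} (Q : SimpleGraph V) (X : Finset V) : ℝ :=
  (X.card : ℝ)⁻¹ * ∑ v ∈ X, ((ndeg Q v : ℝ) + (cliqueAt Q v : ℝ) + 1) / 2

/-- A maximal clique. -/
def IsMaxClique {V : Type*} (Q : SimpleGraph V) (s : Finset V) : Prop :=
  Q.IsClique ↑s ∧ ∀ t : Finset V, Q.IsClique ↑t → s ⊆ t → s = t

/-- gamma_r(Q): max over cliques of size exactly r and maximal cliques of size
less than r of the average of (d(v) + omega(v) + 1)/2. -/
noncomputable def gamma {V : Type*} (Q : SimpleGraph V) (r : ℕ) : ℝ :=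
  sSup {x | ∃ X : Finset V,
    ((Q.IsClique ↑X ∧ X.card = r) ∨ (IsMaxClique Q X ∧ X.card < r)) ∧
    x = gammaVal Q X}

/-- gamma-tilde_r(Q): max of gamma_r over all subgraphs of Q. -/
noncomputable def gammaTilde {V : Type*} (Q : SimpleGraph V) (r : ℕ) : ℝ :=
  sSup {x | ∃ (s : Set V) (H : SimpleGraph s), H ≤ Q.induce s ∧ x = gamma H r}

/-- The chromatic number of a simple graph, as a natural number. -/
noncomputable def sgChrom {V : Type*} (Q : SimpleGraph V) : ℕ :=
  sInf {n | Q.Colorable n}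

/-- The clique number of a simple graph. -/
noncomputable def cliqueNum {V : Type*} (Q : SimpleGraph V) : ℕ :=
  sSup {n | ∃ s : Finset V, Q.IsNClique n s}

/-- The maximum degree of a finite simple graph. -/
noncomputable def sgMaxDegree {V : Type*} [Fintype V] (Q : SimpleGraph V) : ℕ :=
  Finset.univ.sup (fun v => Nat.card {w | Q.Adj v w})

end StmtDefs

open StmtDefs

set_option linter.unusedSectionVars false

section Aux
variable {V : Type*} [Fintype V] (Q : SimpleGraph V)

private lemma cliqueSet_bdd (v : V) :
    BddAbove {n | ∃ c : Finset V, Q.IsNClique n c ∧ v ∈ c} := by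
  refine ⟨Fintype.card V, ?_⟩
  rintro n ⟨c, hc, -⟩
  rw [← hc.2]
  exact Finset.card_le_univ c

private lemma one_le_cliqueAt (v : V) : 1 ≤ cliqueAt Q v := by
  apply le_csSup (cliqueSet_bdd Q v)
  refine ⟨{v}, ⟨?_, Finset.card_singleton v⟩, Finset.mem_singleton_self v⟩
  simp [SimpleGraph.isClique_iff, Set.pairwise_singleton]

private lemma ndeg_induce_le (s : Set V) (v : ↥s) :
    ndeg (Q.induce s) v ≤ ndeg Q ↑v := by
  unfold ndeg
  have hf : Function.Injective (fun w : {w : ↥s | (Q.induce s).Adj v w} =>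
      (⟨(w.1 : V), w.2⟩ : {w : V | Q.Adj ↑v w})) := by
    rintro ⟨⟨a, ha⟩, ha'⟩ ⟨⟨b, hb⟩, hb'⟩ h
    have := congrArg Subtype.val h
    simpa using this
  exact Nat.card_le_card_of_injective _ hf

private lemma isClique_image (s : Set V) (X : Finset ↥s)
    (h : (Q.induce s).IsClique ↑X) : Q.IsClique ↑(X.image Subtype.val) := by
  rw [Finset.coe_image]
  rintro a ⟨a', ha', rfl⟩ b ⟨b', hb', rfl⟩ hab
  have hne : a' ≠ b' := fun e => hab (by rw [e])
  have := h ha' hb' hne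
  simpa using this

private lemma cliqueAt_induce_le (s : Set V) (v : ↥s) :
    cliqueAt (Q.induce s) v ≤ cliqueAt Q ↑v := by
  apply csSup_le_csSup (cliqueSet_bdd Q ↑v)
  · refine ⟨1, {v}, ⟨?_, Finset.card_singleton v⟩, Finset.mem_singleton_self v⟩
    simp [SimpleGraph.isClique_iff, Set.pairwise_singleton]
  · rintro n ⟨c, hc, hvc⟩
    refine ⟨c.image Subtype.val, ⟨isClique_image Q s c hc.1, ?_⟩,
      Finset.mem_image_of_mem _ hvc⟩
    rw [Finset.card_image_of_injective _ Subtype.val_injective, hc.2]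

private lemma exists_maxcard_clique :
    ∃ M : Finset V, Q.IsClique ↑M ∧ ∀ t : Finset V, Q.IsClique ↑t → t.card ≤ M.card := by
  obtain ⟨M, hM, hmax⟩ := Finset.exists_max_image
    (Finset.univ.filter fun X : Finset V => Q.IsClique ↑X) Finset.card
    ⟨∅, by simp [SimpleGraph.isClique_iff]⟩
  refine ⟨M, (Finset.mem_filter.1 hM).2, fun t ht => hmax t (Finset.mem_filter.2 ⟨Finset.mem_univ t, ht⟩)⟩

private lemma gammaVal_nonneg (X : Finset V) : 0 ≤ gammaVal Q X := by
  unfold gammaVal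
  apply mul_nonneg (inv_nonneg.2 (Nat.cast_nonneg _))
  apply Finset.sum_nonneg
  intro v _
  positivity

private lemma one_le_gammaVal (X : Finset V) (hX : X.Nonempty) : 1 ≤ gammaVal Q X := by
  unfold gammaVal
  have hc : (0:ℝ) < X.card := by exact_mod_cast Finset.card_pos.2 hX
  have h1 : ∀ v ∈ X, (1:ℝ) ≤ ((ndeg Q v : ℝ) + (cliqueAt Q v : ℝ) + 1) / 2 := by
    intro v _
    have h := one_le_cliqueAt Q v
    have h' : (1:ℝ) ≤ (cliqueAt Q v : ℝ) := by exact_mod_cast h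
    have h0 : (0:ℝ) ≤ (ndeg Q v : ℝ) := Nat.cast_nonneg _
    linarith
  calc (1:ℝ) = (X.card : ℝ)⁻¹ * X.card := by field_simp
    _ ≤ _ := by
        apply mul_le_mul_of_nonneg_left _ (inv_nonneg.2 hc.le)
        calc (X.card : ℝ) = ∑ _v ∈ X, (1:ℝ) := by simp
          _ ≤ _ := Finset.sum_le_sum h1

private lemma gamma_set_bdd (r : ℕ) :
    BddAbove {x | ∃ X : Finset V,
      ((Q.IsClique ↑X ∧ X.card = r) ∨ (IsMaxClique Q X ∧ X.card < r)) ∧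
      x = gammaVal Q X} := by
  apply Set.Finite.bddAbove
  apply Set.Finite.subset (Set.finite_range (gammaVal Q))
  rintro x ⟨X, -, rfl⟩
  exact ⟨X, rfl⟩

private lemma exists_gamma_mem (r : ℕ) :
    ∃ X : Finset V,
      ((Q.IsClique ↑X ∧ X.card = r) ∨ (IsMaxClique Q X ∧ X.card < r)) := by
  obtain ⟨M, hM, hmax⟩ := exists_maxcard_clique Q
  rcases le_or_gt r M.card with h | h
  · obtain ⟨X, hXM, hXc⟩ := Finset.exists_subset_card_eq h
    exact ⟨X, Or.inl ⟨hM.subset (Finset.coe_subset.2 hXM), hXc⟩⟩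
  · exact ⟨M, Or.inr ⟨⟨hM, fun t ht hsub => Finset.eq_of_subset_of_card_le hsub (hmax t ht)⟩, h⟩⟩

private lemma zero_le_gamma (r : ℕ) : 0 ≤ gamma Q r := by
  obtain ⟨X, hX⟩ := exists_gamma_mem Q r
  exact le_trans (gammaVal_nonneg Q X) (le_csSup (gamma_set_bdd Q r) ⟨X, hX, rfl⟩)

private lemma one_le_gamma_two [Nonempty V] : 1 ≤ gamma Q 2 := by
  obtain ⟨M, hM, hmax⟩ := exists_maxcard_clique Q
  have h1 : 1 ≤ M.card := by
    have := hmax {Classical.arbitrary V} (by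
      simp [SimpleGraph.isClique_iff, Set.pairwise_singleton])
    simpa using this
  rcases le_or_gt 2 M.card with h | h
  · obtain ⟨X, hXM, hXc⟩ := Finset.exists_subset_card_eq h
    have hcl : Q.IsClique ↑X := hM.subset (Finset.coe_subset.2 hXM)
    have hne : X.Nonempty := Finset.card_pos.1 (by omega)
    exact le_trans (one_le_gammaVal Q X hne)
      (le_csSup (gamma_set_bdd Q 2) ⟨X, Or.inl ⟨hcl, hXc⟩, rfl⟩)
  · have hmc : IsMaxClique Q M :=
      ⟨hM, fun t ht hsub => Finset.eq_of_subset_of_card_le hsub (hmax t ht)⟩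
    have hne : M.Nonempty := Finset.card_pos.1 h1
    exact le_trans (one_le_gammaVal Q M hne)
      (le_csSup (gamma_set_bdd Q 2) ⟨M, Or.inr ⟨hmc, h⟩, rfl⟩)

private lemma gammaVal_induce_le (s : Set V) (X : Finset ↥s) :
    gammaVal (Q.induce s) X ≤ gammaVal Q (X.image Subtype.val) := by
  unfold gammaVal
  rw [Finset.card_image_of_injective _ Subtype.val_injective,
    Finset.sum_image (fun a _ b _ h => Subtype.val_injective h)]
  apply mul_le_mul_of_nonneg_left _ (inv_nonneg.2 (Nat.cast_nonneg _))
  apply Finset.sum_le_sum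
  intro v _
  have h1 : (ndeg (Q.induce s) v : ℝ) ≤ (ndeg Q ↑v : ℝ) := by
    exact_mod_cast ndeg_induce_le Q s v
  have h2 : (cliqueAt (Q.induce s) v : ℝ) ≤ (cliqueAt Q ↑v : ℝ) := by
    exact_mod_cast cliqueAt_induce_le Q s v
  linarith

private lemma gammaVal_singleton_max (s : Set V) (v : ↥s)
    (hmax : IsMaxClique (Q.induce s) {v}) : gammaVal (Q.induce s) {v} ≤ 1 := by
  haveI : Fintype ↥s := Fintype.ofFinite _
  have hadj : ∀ w, ¬ (Q.induce s).Adj v w := by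
    intro w hw
    have hcl : (Q.induce s).IsClique ↑({v, w} : Finset ↥s) := by
      rw [Finset.coe_insert, Finset.coe_singleton]
      intro a ha b hb hab
      simp only [Set.mem_insert_iff, Set.mem_singleton_iff] at ha hb
      rcases ha with rfl | rfl <;> rcases hb with rfl | rfl
      · exact absurd rfl hab
      · exact hw
      · exact hw.symm
      · exact absurd rfl hab
    have heq := hmax.2 {v, w} hcl (by simp)
    have hwv : w ∈ ({v} : Finset ↥s) := heq ▸ (by simp)
    rw [Finset.mem_singleton] at hwv
    exact hw.ne hwv.symm
  have h0 : ndeg (Q.induce s) v = 0 := by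
    unfold ndeg
    rw [Nat.card_eq_zero]
    exact Or.inl ⟨fun w => hadj w.1 w.2⟩
  have h1 : cliqueAt (Q.induce s) v = 1 := by
    refine le_antisymm ?_ (one_le_cliqueAt _ v)
    apply csSup_le
    · exact ⟨1, {v}, ⟨by simp [SimpleGraph.isClique_iff, Set.pairwise_singleton],
        Finset.card_singleton v⟩, Finset.mem_singleton_self v⟩
    · rintro n ⟨c, hc, hvc⟩
      by_contra hn
      push_neg at hn
      have hcc : 1 < c.card := by rw [hc.2]; omega
      obtain ⟨w, hwc, hwv⟩ := Finset.exists_mem_ne hcc v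
      exact hadj w (hc.1 hvc hwc (Ne.symm hwv))
  unfold gammaVal
  rw [Finset.sum_singleton, h0, h1]
  norm_num

end Aux

/-- gamma_1 and gamma_2 are monotone under induced subgraphs. -/
theorem stmt12 {V : Type*} [Fintype V] (Q : SimpleGraph V) (s : Set V)
    (r : ℕ) (hr : r = 1 ∨ r = 2) :
    gamma (Q.induce s) r ≤ gamma Q r := by
  haveI : Fintype ↥s := Fintype.ofFinite _
  apply Real.sSup_le _ (zero_le_gamma Q r)
  rintro x ⟨X, hX, rfl⟩
  rcases hX with ⟨hcl, hcard⟩ | ⟨hmax, hcard⟩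
  · calc gammaVal (Q.induce s) X ≤ gammaVal Q (X.image Subtype.val) :=
        gammaVal_induce_le Q s X
      _ ≤ gamma Q r := le_csSup (gamma_set_bdd Q r)
          ⟨X.image Subtype.val, Or.inl ⟨isClique_image Q s X hcl,
            by rw [Finset.card_image_of_injective _ Subtype.val_injective, hcard]⟩, rfl⟩
  · have hz : X.card = 0 → gammaVal (Q.induce s) X ≤ gamma Q r := by
      intro h0
      rw [Finset.card_eq_zero] at h0
      subst h0
      have : gammaVal (Q.induce s) (∅ : Finset ↥s) = 0 := by
        simp [gammaVal]
      rw [this]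
      exact zero_le_gamma Q r
    rcases hr with rfl | rfl
    · exact hz (by omega)
    · rcases (by omega : X.card = 0 ∨ X.card = 1) with h0 | h1
      · exact hz h0
      · obtain ⟨v, rfl⟩ := Finset.card_eq_one.1 h1
        haveI : Nonempty V := ⟨↑v⟩
        calc gammaVal (Q.induce s) {v} ≤ 1 := gammaVal_singleton_max Q s v hmax
          _ ≤ gamma Q 2 := one_le_gamma_two Q
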